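/- arXiv:math/0609044 — 2 statements merged into one kernel-verified Lean document; each statement's English description precedes it below -/
import Mathlib

section
/- The combinatorial harmonic measure Ω is a flow: for every vertex a of the tree with dynamics, Ω(a) = ∑_{a^C child of a} Ω(a^C). -/
open Filter

/-- A tree with dynamics `⟨T, F, deg⟩` of degree `d`, with dynamics shifting
levels up by `H`.  Vertices form the type `V`, each vertex has an integer
level, a parent (one level up), at least one and finitely many children.
Levels `≤ 0` consist of a single vertex (the root and extended root), each of
degree `d`.  The dynamics `F` map level `l` to level `l - H`, preserve the
child relation, and satisfy the local cover property. -/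
structure TreeWithDynamics (V : Type*) where
  level : V → ℤ
  parent : V → V
  F : V → V
  deg : V → ℕ
  H : ℕ
  d : ℕ
  H_pos : 0 < H
  d_ge : 2 ≤ d
  level_parent : ∀ a, level (parent a) = level a - 1
  sub_root : ∀ a b, level a ≤ 0 → level b ≤ 0 → level a = level b → a = b
  child_exists : ∀ a, ∃ b, parent b = a
  children_finite : ∀ a, {b | parent b = a}.Finite
  level_F : ∀ a, level (F a) = level a - H
  F_children : ∀ b, F (parent b) = parent (F b)
  deg_pos : ∀ a, 0 < deg a
  deg_mono : ∀ b, deg b ≤ deg (parent b)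
  deg_root : ∀ a, level a ≤ 0 → deg a = d
  preimage_finite : ∀ a, {b | F b = a}.Finite
  local_cover : ∀ a c, parent c = F a →
    (∑ᶠ b ∈ {b | parent b = a ∧ F b = c}, deg b) = deg a

variable {V : Type*}

/-- `Ω` is the combinatorial harmonic measure of the tree with dynamics `T`:
it equals `1` on the root and extended root, and satisfies
`Ω a = (deg a / d) * Ω (F a)` elsewhere. -/
def IsCombHarm (T : TreeWithDynamics V) (Ω : V → ℝ) : Prop :=
  (∀ a, T.level a ≤ 0 → Ω a = 1) ∧
  (∀ a, 0 < T.level a → Ω a = (T.deg a / T.d) * Ω (T.F a))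

/-- An end of the tree: a sequence of vertices starting at the root, each a
child of the previous one. -/
structure TreeEnd (T : TreeWithDynamics V) where
  seq : ℕ → V
  level_seq : ∀ l, T.level (seq l) = l
  parent_seq : ∀ l, T.parent (seq (l + 1)) = seq l

/-- The degree of an end: the (eventual) limit of the nonincreasing sequence
of degrees along the end, i.e. its infimum. -/
noncomputable def endDeg {T : TreeWithDynamics V} (x : TreeEnd T) : ℕ :=
  ⨅ l, T.deg (x.seq l)

/-- Ceiling of `l / H` for natural numbers (`H > 0`). -/
def ceilDiv (l H : ℕ) : ℕ := (l + H - 1) / H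

/-- The combinatorial harmonic measure is a flow: the measure of a vertex is
the sum of the measures of its children. -/
theorem stmt2 (T : TreeWithDynamics V) (Ω : V → ℝ) (hΩ : IsCombHarm T Ω)
    (a : V) :
    Ω a = ∑ᶠ c ∈ {c | T.parent c = a}, Ω c := by
  obtain ⟨h1, h2⟩ := hΩ
  classical
  have hd : (0:ℝ) < T.d := by exact_mod_cast lt_of_lt_of_le (by norm_num) T.d_ge
  have hlevchild : ∀ c : V, T.level c = T.level (T.parent c) + 1 := by
    intro c; have := T.level_parent c; omega
  suffices Hmain : ∀ n : ℕ, ∀ a : V, (T.level a).toNat = n →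
      Ω a = ∑ᶠ c ∈ {c | T.parent c = a}, Ω c from Hmain _ a rfl
  intro n
  induction n using Nat.strong_induction_on with
  | _ n ih =>
  intro a hn
  rw [← (T.children_finite a).coe_toFinset, finsum_mem_coe_finset]
  set s := (T.children_finite a).toFinset with hs
  have hmem : ∀ c, c ∈ s ↔ T.parent c = a := by
    intro c; simp [hs, Set.Finite.mem_toFinset]
  rcases lt_trichotomy (T.level a) 0 with hlt | heq | hgt
  · -- level a < 0 : unique child at level ≤ 0
    obtain ⟨b, hb⟩ := T.child_exists a
    have hbl : T.level b ≤ 0 := by have := hlevchild b; rw [hb] at this; omega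
    have hseq : s = {b} := by
      apply Finset.eq_singleton_iff_unique_mem.2
      refine ⟨(hmem b).2 hb, fun c hc => ?_⟩
      have hc' := (hmem c).1 hc
      have hcl : T.level c ≤ 0 := by have := hlevchild c; rw [hc'] at this; omega
      have hlev : T.level c = T.level b := by
        have e1 := hlevchild c; have e2 := hlevchild b
        rw [hc'] at e1; rw [hb] at e2; omega
      exact T.sub_root c b hcl hbl hlev
    rw [hseq, Finset.sum_singleton, h1 a (le_of_lt hlt), h1 b hbl]
  · -- level a = 0
    obtain ⟨c₀, hc₀⟩ := T.child_exists (T.F a)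
    have hc₀l : T.level c₀ ≤ 0 := by
      have := hlevchild c₀; rw [hc₀] at this; rw [T.level_F a, heq] at this
      have := T.H_pos; omega
    have key : ∀ c, T.parent c = a → T.F c = c₀ := by
      intro c hc
      have hpc : T.parent (T.F c) = T.F a := by rw [← T.F_children, hc]
      have hlc : T.level c = 1 := by have := hlevchild c; rw [hc] at this; omega
      have hlFc : T.level (T.F c) ≤ 0 := by
        rw [T.level_F, hlc]; have := T.H_pos; omega
      apply T.sub_root _ _ hlFc hc₀l
      have e1 := hlevchild (T.F c); rw [hpc] at e1
      have e2 := hlevchild c₀; rw [hc₀] at e2; omega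
    have hsetEq : {b | T.parent b = a ∧ T.F b = c₀} = (↑s : Set V) := by
      ext b; simp only [Set.mem_setOf_eq, Finset.coe_insert, Finset.mem_coe, hmem]
      exact ⟨fun h => h.1, fun h => ⟨h, key b h⟩⟩
    have hdeg : (∑ b ∈ s, T.deg b) = T.deg a := by
      have := T.local_cover a c₀ hc₀
      rwa [hsetEq, finsum_mem_coe_finset] at this
    have hΩc : ∀ c ∈ s, Ω c = (T.deg c : ℝ) / T.d := by
      intro c hc
      have hc' := (hmem c).1 hc
      have hlc : T.level c = 1 := by have := hlevchild c; rw [hc'] at this; omega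
      have hlFc : T.level (T.F c) ≤ 0 := by
        rw [T.level_F, hlc]; have := T.H_pos; omega
      rw [h2 c (by omega), h1 _ hlFc, mul_one]
    rw [Finset.sum_congr rfl hΩc, ← Finset.sum_div, h1 a (le_of_eq heq)]
    rw [← Nat.cast_sum, hdeg, T.deg_root a (le_of_eq heq)]
    field_simp
  · -- level a > 0
    set t := (T.children_finite (T.F a)).toFinset with ht
    have htmem : ∀ c, c ∈ t ↔ T.parent c = T.F a := by
      intro c; simp [ht, Set.Finite.mem_toFinset]
    have hmaps : ∀ c ∈ s, T.F c ∈ t := by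
      intro c hc
      rw [htmem, ← T.F_children, (hmem c).1 hc]
    rw [← Finset.sum_fiberwise_of_maps_to hmaps Ω]
    have hfiber : ∀ c' ∈ t, (∑ c ∈ s.filter (fun c => T.F c = c'), Ω c)
        = (T.deg a : ℝ) / T.d * Ω c' := by
      intro c' hc'
      have hΩc : ∀ c ∈ s.filter (fun c => T.F c = c'),
          Ω c = (T.deg c : ℝ) / T.d * Ω c' := by
        intro c hc
        rw [Finset.mem_filter] at hc
        have hpc := (hmem c).1 hc.1
        have hlc : 0 < T.level c := by have := hlevchild c; rw [hpc] at this; omega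
        rw [h2 c hlc, hc.2]
      rw [Finset.sum_congr rfl hΩc, ← Finset.sum_mul, ← Finset.sum_div]
      congr 2
      have hsetEq : {b | T.parent b = a ∧ T.F b = c'}
          = (↑(s.filter (fun c => T.F c = c')) : Set V) := by
        ext b
        simp only [Set.mem_setOf_eq, Finset.coe_filter, Set.mem_setOf_eq, hmem]
      have := T.local_cover a c' ((htmem c').1 hc')
      rw [hsetEq, finsum_mem_coe_finset] at this
      rw [← Nat.cast_sum, this]
    rw [Finset.sum_congr rfl hfiber, ← Finset.mul_sum, h2 a hgt]
    congr 1
    have hlt' : (T.level (T.F a)).toNat < n := by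
      have := T.level_F a; have := T.H_pos; omega
    have := ih _ hlt' (T.F a) rfl
    rw [this, ← (T.children_finite (T.F a)).coe_toFinset, finsum_mem_coe_finset]
end

section
/- Let D be the maximum of deg(x⃗) over all ends x⃗ of the tree with dynamics, and suppose only finitely many levels of the tree contain a vertex of degree greater than D. Then there exists a constant c₀ > 0 such that for all l ≥ 0 and all vertices a ∈ T_l, Ω(a) ≤ c₀ · (D/d)^⌈l/H⌉. -/
open Filter

variable {V : Type*}

private lemma ceilDiv_step (l H : ℕ) (hl : 1 ≤ l) (hH : 1 ≤ H) :
    ceilDiv l H = ceilDiv (l - H) H + 1 := by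
  unfold ceilDiv
  rcases le_or_gt l H with h | h
  · have h1 : l - H = 0 := by omega
    rw [h1]
    have h2 : (0 + H - 1) / H = 0 := Nat.div_eq_of_lt (by omega)
    rw [h2]
    have h3 : l + H - 1 = (l - 1) + H := by omega
    rw [h3, Nat.add_div_right _ (by omega)]
    have h4 : (l - 1) / H = 0 := Nat.div_eq_of_lt (by omega)
    omega
  · have h3 : l + H - 1 = (l - H + H - 1) + H := by omega
    rw [h3, Nat.add_div_right _ (by omega)]

private lemma deg_le_d (T : TreeWithDynamics V) (a : V) : T.deg a ≤ T.d := by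
  suffices h : ∀ n : ℕ, ∀ a : V, (T.level a).toNat ≤ n → T.deg a ≤ T.d from
    h (T.level a).toNat a le_rfl
  intro n
  induction n with
  | zero =>
    intro a h
    rcases le_or_gt (T.level a) 0 with h0 | h0
    · exact (T.deg_root a h0).le
    · omega
  | succ n ih =>
    intro a h
    rcases le_or_gt (T.level a) 0 with h0 | h0
    · exact (T.deg_root a h0).le
    · refine (T.deg_mono a).trans (ih _ ?_)
      have := T.level_parent a
      omega

/-- If `D` is the maximum of the degrees of ends, and only finitely many
levels contain a vertex of degree greater than `D`, then there is a constant
`c₀ > 0` such that `Ω(a) ≤ c₀ · (D/d)^⌈l/H⌉` for every vertex `a` at level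
`l ≥ 0`. -/
theorem stmt4 (T : TreeWithDynamics V) (Ω : V → ℝ) (hΩ : IsCombHarm T Ω)
    (D : ℕ)
    (hub : ∀ x : TreeEnd T, endDeg x ≤ D)
    (hmax : ∃ x : TreeEnd T, endDeg x = D)
    (hfin : {l : ℤ | ∃ a, T.level a = l ∧ D < T.deg a}.Finite) :
    ∃ c₀ > (0 : ℝ), ∀ a : V, 0 ≤ T.level a →
      Ω a ≤ c₀ * ((D : ℝ) / T.d) ^ ceilDiv (T.level a).toNat T.H := by
  classical
  obtain ⟨x, hx⟩ := hmax
  have hH := T.H_pos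
  have hd0 : (0:ℝ) < T.d := by
    have := T.d_ge; positivity
  have hD1 : 1 ≤ D := by
    rw [← hx]
    exact le_ciInf fun l => T.deg_pos _
  have hD0 : (0:ℝ) < D := by exact_mod_cast hD1
  have hDd : D ≤ T.d := by
    rw [← hx]
    have h1 : endDeg x ≤ T.deg (x.seq 0) := ciInf_le (OrderBot.bddBelow _) 0
    have h2 : T.deg (x.seq 0) ≤ T.deg (T.parent (x.seq 0)) := T.deg_mono _
    have h3 : T.deg (T.parent (x.seq 0)) = T.d := by
      refine T.deg_root _ ?_
      rw [T.level_parent, x.level_seq]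
      norm_num
    omega
  obtain ⟨N, hN⟩ := hfin.bddAbove
  set LL := N.toNat with hLLdef
  have hLL : ∀ a : V, (LL:ℤ) < T.level a → T.deg a ≤ D := by
    intro a ha
    by_contra hcon
    push_neg at hcon
    have hmem : T.level a ∈ {l : ℤ | ∃ a, T.level a = l ∧ D < T.deg a} :=
      ⟨a, rfl, hcon⟩
    have := hN hmem
    omega
  set r : ℝ := (D:ℝ)/T.d with hrdef
  have hr0 : (0:ℝ) ≤ r := by positivity
  have hr1 : r ≤ 1 := by
    rw [hrdef, div_le_one hd0]
    exact_mod_cast hDd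
  set M := ceilDiv LL T.H with hMdef
  have key : ∀ n : ℕ, ∀ a : V, (T.level a).toNat ≤ n →
      Ω a ≤ r ^ (ceilDiv (T.level a).toNat T.H - M) := by
    have base : ∀ a : V, T.level a ≤ 0 →
        Ω a ≤ r ^ (ceilDiv (T.level a).toNat T.H - M) := by
      intro a h0
      rw [hΩ.1 a h0]
      have h1 : (T.level a).toNat = 0 := by omega
      have h2 : ceilDiv 0 T.H = 0 := Nat.div_eq_of_lt (by omega)
      rw [h1, h2]
      simp
    intro n
    induction n with
    | zero =>
      intro a hle
      rcases le_or_gt (T.level a) 0 with h0 | h0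
      · exact base a h0
      · omega
    | succ n ih =>
      intro a hle
      rcases le_or_gt (T.level a) 0 with h0 | h0
      · exact base a h0
      · have hl1 : 1 ≤ (T.level a).toNat := by omega
        set l := (T.level a).toNat with hldef
        rw [hΩ.2 a h0]
        have hlF : (T.level (T.F a)).toNat = l - T.H := by
          rw [T.level_F]; omega
        have hF := ih (T.F a) (by omega)
        rw [hlF] at hF
        have hstep : ceilDiv l T.H = ceilDiv (l - T.H) T.H + 1 :=
          ceilDiv_step l T.H hl1 hH
        have hdegd : T.deg a ≤ T.d := deg_le_d T a
        have hdd : (0:ℝ) ≤ (T.deg a : ℝ)/T.d := by positivity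
        rcases le_or_gt (T.level a) (LL:ℤ) with hc | hc
        · have hkM : ceilDiv l T.H ≤ M := by
            rw [hMdef]
            exact Nat.div_le_div_right (by omega)
          have he0 : ceilDiv l T.H - M = 0 := by omega
          rw [he0, pow_zero]
          have h1 : Ω (T.F a) ≤ 1 := hF.trans (pow_le_one₀ hr0 hr1)
          calc ((T.deg a : ℝ) / T.d) * Ω (T.F a)
              ≤ ((T.deg a : ℝ) / T.d) * 1 := mul_le_mul_of_nonneg_left h1 hdd
            _ ≤ 1 := by
                rw [mul_one, div_le_one hd0]
                exact_mod_cast hdegd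
        · have hdeg : T.deg a ≤ D := hLL a hc
          calc ((T.deg a : ℝ) / T.d) * Ω (T.F a)
              ≤ ((T.deg a : ℝ) / T.d) * r ^ (ceilDiv (l - T.H) T.H - M) :=
                mul_le_mul_of_nonneg_left hF hdd
            _ ≤ r * r ^ (ceilDiv (l - T.H) T.H - M) := by
                refine mul_le_mul_of_nonneg_right ?_ (pow_nonneg hr0 _)
                rw [hrdef]
                gcongr
            _ = r ^ (ceilDiv (l - T.H) T.H - M + 1) := by
                rw [pow_succ]; ring
            _ ≤ r ^ (ceilDiv l T.H - M) :=
                pow_le_pow_of_le_one hr0 hr1 (by omega)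
  refine ⟨((T.d:ℝ)/D)^M, by positivity, ?_⟩
  intro a _
  refine (key (T.level a).toNat a le_rfl).trans ?_
  set k := ceilDiv (T.level a).toNat T.H with hkdef
  have hq : ((T.d:ℝ)/D) * r = 1 := by
    rw [hrdef]
    field_simp
  rcases le_or_gt M k with h | h
  · set e := k - M with hedef
    have hk : k = M + e := by omega
    rw [hk, pow_add, ← mul_assoc, ← mul_pow, hq, one_pow, one_mul]
  · have he0 : k - M = 0 := by omega
    rw [he0, pow_zero]
    calc (1:ℝ) = (((T.d:ℝ)/D) * r) ^ k := by rw [hq, one_pow]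
      _ = ((T.d:ℝ)/D)^k * r^k := mul_pow _ _ _
      _ ≤ ((T.d:ℝ)/D)^M * r^k := by
          refine mul_le_mul_of_nonneg_right ?_ (pow_nonneg hr0 _)
          refine pow_le_pow_right₀ ?_ h.le
          rw [le_div_iff₀ hD0, one_mul]
          exact_mod_cast hDd
end
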